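/- Let ρ > 0 and let T, A be operators on a Hilbert space H admitting unitary ρ-dilations U_T, U_A on a common Hilbert space K ⊇ H. If ‖T‖ = ρ and T ⊥_B A, then U_T ⊥_B U_A. -/

import Mathlib

/-- If `T ⊥_B A` and `‖T‖ = ρ`, then any unitary `ρ`-dilations of `T` and `A` acting on a
common space are Birkhoff-James orthogonal. -/
theorem birkhoffJames_of_rho_dilations
    {K : Type*} [NormedAddCommGroup K] [InnerProductSpace ℂ K] [CompleteSpace K]
    (p : Submodule ℂ K) [CompleteSpace p]
    (ρ : ℝ) (hρ : 0 < ρ)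
    (T A : p →L[ℂ] p) (UT UA : K →L[ℂ] K)
    (hUT : UT ∈ unitary (K →L[ℂ] K)) (hUA : UA ∈ unitary (K →L[ℂ] K))
    (hdilT : ∀ x : p, T x = (ρ : ℂ) • p.orthogonalProjection (UT (x : K)))
    (hdilA : ∀ x : p, A x = (ρ : ℂ) • p.orthogonalProjection (UA (x : K)))
    (hTnorm : ‖T‖ = ρ)
    (hBJ : ∀ lam : ℂ, ‖T + lam • A‖ ≥ ‖T‖) :
    ∀ lam : ℂ, ‖UT + lam • UA‖ ≥ ‖UT‖ := by
  intro lam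
  -- ‖UT‖ ≤ 1
  have hUTle : ‖UT‖ ≤ 1 := by
    refine ContinuousLinearMap.opNorm_le_bound _ zero_le_one fun x => ?_
    rw [one_mul, UT.norm_map_of_mem_unitary hUT]
  -- key pointwise estimate
  have key : ∀ x : p, ‖(T + lam • A) x‖ ≤ (ρ * ‖UT + lam • UA‖) * ‖x‖ := by
    intro x
    have hx : (T + lam • A) x
        = (ρ : ℂ) • p.orthogonalProjection ((UT + lam • UA) (x : K)) := by
      simp only [ContinuousLinearMap.add_apply, ContinuousLinearMap.smul_apply,
        hdilT, hdilA, map_add, map_smul]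
      module
    rw [hx]
    calc ‖(ρ : ℂ) • p.orthogonalProjection ((UT + lam • UA) (x : K))‖
        = ρ * ‖p.orthogonalProjection ((UT + lam • UA) (x : K))‖ := by
          rw [norm_smul, Complex.norm_real, Real.norm_of_nonneg hρ.le]
      _ ≤ ρ * ‖(UT + lam • UA) (x : K)‖ := by
          gcongr
          calc ‖p.orthogonalProjection ((UT + lam • UA) (x : K))‖
              ≤ ‖p.orthogonalProjection‖ * ‖(UT + lam • UA) (x : K)‖ :=
                (p.orthogonalProjection).le_opNorm _
            _ ≤ 1 * ‖(UT + lam • UA) (x : K)‖ := by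
                gcongr; exact Submodule.orthogonalProjectionOnto_norm_le p
            _ = _ := one_mul _
      _ ≤ ρ * (‖UT + lam • UA‖ * ‖(x : K)‖) := by
          gcongr; exact (UT + lam • UA).le_opNorm _
      _ = (ρ * ‖UT + lam • UA‖) * ‖x‖ := by rw [Submodule.norm_coe]; ring
  have hle : ‖T + lam • A‖ ≤ ρ * ‖UT + lam • UA‖ :=
    ContinuousLinearMap.opNorm_le_bound _
      (mul_nonneg hρ.le (norm_nonneg _)) key
  have h1 : ρ ≤ ρ * ‖UT + lam • UA‖ := by
    calc ρ = ‖T‖ := hTnorm.symm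
      _ ≤ ‖T + lam • A‖ := hBJ lam
      _ ≤ _ := hle
  have h2 : (1 : ℝ) ≤ ‖UT + lam • UA‖ := by
    nlinarith
  linarith
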